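/- arXiv:0811.0783 — 2 statements merged into one kernel-verified Lean document; each statement's English description precedes it below -/
import Mathlib

section
/- Let a, b, c ∈ ℝ³ be mutually orthogonal vectors, each of norm 1/√2. Let G be the four-outcome observable on Ω = {0,1}×{0,1} defined by G(i,j) := ‖n_{ij}‖ · (1/2)(I + (n_{ij}/‖n_{ij}‖)·σ) with n_{ij} := (1/2)((−1)^{i+1} a + (−1)^{j+1} b), and let F be the four-outcome observable defined analogously with the pair (b,c) in place of (a,b). Then G and F are not jointly measurable, but for every pair of subsets X ⊆ Ω and Y ⊆ Ω, the partitionings G^X and F^Y are jointly measurable. -/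
open Matrix
open scoped ComplexOrder

noncomputable section

/-- 2×2 complex matrices. -/
abbrev Mat2 := Matrix (Fin 2) (Fin 2) ℂ

/-- The Pauli matrix σ₁. -/
def sigma1 : Mat2 := !![0, 1; 1, 0]
/-- The Pauli matrix σ₂. -/
def sigma2 : Mat2 := !![0, -Complex.I; Complex.I, 0]
/-- The Pauli matrix σ₃. -/
def sigma3 : Mat2 := !![1, 0; 0, -1]

/-- ℝ³ with the Euclidean norm. -/
abbrev E3 := EuclideanSpace ℝ (Fin 3)

/-- For `v ∈ ℝ³`, `v·σ = v₁σ₁ + v₂σ₂ + v₃σ₃`. -/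
def dotSigma (v : E3) : Mat2 := (v 0 : ℂ) • sigma1 + (v 1 : ℂ) • sigma2 + (v 2 : ℂ) • sigma3

/-- `A^{α,a} = (1/2)(α·I + a·σ)`. -/
def Amat (α : ℝ) (a : E3) : Mat2 := (2 : ℂ)⁻¹ • ((α : ℂ) • (1 : Mat2) + dotSigma a)

/-- An operator is an effect if `0 ≤ A ≤ I` in the Loewner order. -/
def IsEffect (A : Mat2) : Prop := A.PosSemidef ∧ (1 - A).PosSemidef

/-- The Loewner order: `A ≤ B` iff `B - A` is positive semidefinite. -/
def loewnerLE (A B : Mat2) : Prop := (B - A).PosSemidef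

/-- The simple (two-outcome) qubit observable `E^{α,a}`,
with `E^{α,a}(1) = A^{α,a}` and `E^{α,a}(0) = I - A^{α,a}`. -/
def Eobs (α : ℝ) (a : E3) : Fin 2 → Mat2 := fun i => if i = 1 then Amat α a else 1 - Amat α a

/-- `G` is a joint observable of the two-outcome observables `E` and `F`. -/
def IsJointObs (G : Fin 2 → Fin 2 → Mat2) (E F : Fin 2 → Mat2) : Prop :=
  (∀ i j, (G i j).PosSemidef) ∧ (∑ i, ∑ j, G i j) = 1 ∧
    (∀ i, (∑ j, G i j) = E i) ∧ (∀ j, (∑ i, G i j) = F j)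

/-- Joint measurability of two two-outcome observables. -/
def JointlyMeasurable2 (E F : Fin 2 → Mat2) : Prop := ∃ G, IsJointObs G E F

/-- `G` is a joint observable of the three two-outcome observables `E`, `F` and `K`. -/
def IsJointObs3 (G : Fin 2 → Fin 2 → Fin 2 → Mat2) (E F K : Fin 2 → Mat2) : Prop :=
  (∀ i j k, (G i j k).PosSemidef) ∧ (∑ i, ∑ j, ∑ k, G i j k) = 1 ∧
    (∀ i, (∑ j, ∑ k, G i j k) = E i) ∧ (∀ j, (∑ i, ∑ k, G i j k) = F j) ∧
    (∀ k, (∑ i, ∑ j, G i j k) = K k)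

/-- Joint measurability of three two-outcome observables. -/
def JointlyMeasurable3 (E F K : Fin 2 → Mat2) : Prop := ∃ G, IsJointObs3 G E F K

/-- `n_{ij} = (1/2)((-1)^{i+1} a + (-1)^{j+1} b)`. -/
def nvec (a b : E3) (i j : Fin 2) : E3 :=
  (2 : ℝ)⁻¹ • ((-1 : ℝ) ^ ((i : ℕ) + 1) • a + (-1 : ℝ) ^ ((j : ℕ) + 1) • b)

/-- `G(i,j) = ‖n_{ij}‖ (1/2)(I + (n_{ij}/‖n_{ij}‖)·σ)`. -/
def Gab (a b : E3) : Fin 2 → Fin 2 → Mat2 := fun i j =>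
  (‖nvec a b i j‖ : ℂ) •
    ((2 : ℂ)⁻¹ • ((1 : Mat2) + dotSigma (‖nvec a b i j‖⁻¹ • nvec a b i j)))

/-- `K` is a joint observable of the finite-outcome observables `E` (on `ι`) and `F` (on `κ`). -/
def IsJointObsFin {ι κ : Type*} [Fintype ι] [Fintype κ]
    (K : ι → κ → Mat2) (E : ι → Mat2) (F : κ → Mat2) : Prop :=
  (∀ i j, (K i j).PosSemidef) ∧ (∑ i, ∑ j, K i j) = 1 ∧
    (∀ i, (∑ j, K i j) = E i) ∧ (∀ j, (∑ i, K i j) = F j)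

/-- Joint measurability of two finite-outcome observables. -/
def JMfin {ι κ : Type*} [Fintype ι] [Fintype κ] (E : ι → Mat2) (F : κ → Mat2) : Prop :=
  ∃ K, IsJointObsFin K E F

/-- The partitioning `G^X` of a finite-outcome observable `G` with respect to `X`:
`G^X(1) = G(X) = Σ_{i ∈ X} G(i)` and `G^X(0) = I - G(X)`. -/
def partitioningFin {ι : Type*} [Fintype ι] (G : ι → Mat2) (X : Finset ι) : Fin 2 → Mat2 :=
  fun k => if k = 1 then ∑ i ∈ X, G i else 1 - ∑ i ∈ X, G i

section Aux

lemma dotSigma_eq (v : E3) : dotSigma v =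
    !![(v 2 : ℂ), (v 0 : ℂ) - (v 1 : ℂ) * Complex.I;
       (v 0 : ℂ) + (v 1 : ℂ) * Complex.I, -(v 2 : ℂ)] := by
  unfold dotSigma sigma1 sigma2 sigma3
  ext i j
  fin_cases i <;> fin_cases j <;> simp <;> ring

lemma dotSigma_add (u v : E3) : dotSigma (u + v) = dotSigma u + dotSigma v := by
  simp only [dotSigma, PiLp.add_apply, Complex.ofReal_add, add_smul]; abel

lemma dotSigma_smul (r : ℝ) (v : E3) : dotSigma (r • v) = (r : ℂ) • dotSigma v := by
  simp only [dotSigma, PiLp.smul_apply, smul_eq_mul, Complex.ofReal_mul, smul_add, smul_smul]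

lemma dotSigma_zero : dotSigma (0 : E3) = 0 := by
  simp [dotSigma]

lemma inner_eq (u v : E3) : (inner ℝ u v : ℝ) = u 0 * v 0 + u 1 * v 1 + u 2 * v 2 := by
  simp [PiLp.inner_apply, Fin.sum_univ_three, RCLike.inner_apply, mul_comm]

lemma trace_dotSigma (v : E3) : (dotSigma v).trace = 0 := by
  rw [dotSigma_eq, Matrix.trace_fin_two_of]; ring

lemma trace_dotSigma_mul (u v : E3) :
    (dotSigma u * dotSigma v).trace = 2 * ((inner ℝ u v : ℝ) : ℂ) := by
  rw [dotSigma_eq, dotSigma_eq, inner_eq]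
  rw [show ((2:ℂ) * ((u 0 * v 0 + u 1 * v 1 + u 2 * v 2 : ℝ) : ℂ)) =
    2 * ((u 0:ℂ) * v 0 + (u 1:ℂ) * v 1 + (u 2:ℂ) * v 2) by push_cast; ring]
  rw [Matrix.mul_fin_two, Matrix.trace_fin_two_of]
  ring_nf
  simp [Complex.I_sq]

lemma dotSigma_mul_self (v : E3) :
    dotSigma v * dotSigma v = ((‖v‖^2 : ℝ) : ℂ) • 1 := by
  have h : (‖v‖^2 : ℝ) = v 0 * v 0 + v 1 * v 1 + v 2 * v 2 := by
    rw [← real_inner_self_eq_norm_sq, inner_eq]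
  rw [dotSigma_eq, h, Matrix.mul_fin_two]
  ext i j
  fin_cases i <;> fin_cases j <;>
    simp [Matrix.one_apply] <;> push_cast <;> ring_nf <;> simp [Complex.I_sq] <;> ring

lemma dotSigma_conjTranspose (v : E3) : (dotSigma v)ᴴ = dotSigma v := by
  rw [dotSigma_eq]
  ext i j
  fin_cases i <;> fin_cases j <;>
    simp [Matrix.conjTranspose_apply, Complex.conj_ofReal, sub_eq_add_neg]

end Aux
section Aux2

lemma Amat_add (α β : ℝ) (u v : E3) :
    Amat α u + Amat β v = Amat (α + β) (u + v) := by
  unfold Amat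
  rw [dotSigma_add, ← smul_add]
  push_cast
  congr 1
  rw [add_smul]
  abel

lemma Amat_two_zero : Amat 2 (0 : E3) = 1 := by
  unfold Amat
  rw [dotSigma_zero, add_zero, smul_smul]
  norm_num

lemma one_sub_Amat (α : ℝ) (u : E3) : 1 - Amat α u = Amat (2 - α) (-u) := by
  have h := Amat_add α (2 - α) u (-u)
  rw [show α + (2 - α) = 2 by ring, show u + -u = 0 by abel, Amat_two_zero] at h
  linear_combination (norm := abel) -h

lemma psd_smul (A : Mat2) (c : ℝ) (hc : 0 ≤ c) (hA : A.PosSemidef) :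
    ((c : ℂ) • A).PosSemidef := by
  exact hA.smul (Complex.zero_le_real.mpr hc)

lemma psd_B (v : E3) : (((‖v‖ : ℝ) : ℂ) • 1 + dotSigma v).PosSemidef := by
  by_cases h : v = 0
  · subst h
    simp only [norm_zero, Complex.ofReal_zero, zero_smul, dotSigma_zero, add_zero]
    exact Matrix.PosSemidef.zero
  · have hv : (0:ℝ) < ‖v‖ := norm_pos_iff.mpr h
    set B : Mat2 := ((‖v‖ : ℝ) : ℂ) • 1 + dotSigma v with hB
    have hsq : B * B = ((2 * ‖v‖ : ℝ) : ℂ) • B := by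
      rw [hB]
      rw [mul_add, add_mul, add_mul, dotSigma_mul_self]
      simp only [Matrix.smul_mul, Matrix.mul_smul, smul_smul, mul_one, one_mul]
      push_cast
      module
    have hH : Bᴴ = B := by
      rw [hB, Matrix.conjTranspose_add, Matrix.conjTranspose_smul, dotSigma_conjTranspose,
        Matrix.conjTranspose_one]
      simp [Complex.star_def, Complex.conj_ofReal]
    have hBeq : B = (((2 * ‖v‖)⁻¹ : ℝ) : ℂ) • (Bᴴ * B) := by
      rw [hH, hsq, smul_smul]
      norm_cast
      rw [inv_mul_cancel₀ (by positivity), one_smul]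
    rw [hBeq]
    exact psd_smul _ _ (by positivity) (Matrix.posSemidef_conjTranspose_mul_self B)

lemma psd_Amat (γ : ℝ) (w : E3) (h : ‖w‖ ≤ γ) : (Amat γ w).PosSemidef := by
  unfold Amat
  have h2 : (γ : ℂ) • (1 : Mat2) + dotSigma w
      = ((γ - ‖w‖ : ℝ) : ℂ) • 1 + (((‖w‖ : ℝ) : ℂ) • 1 + dotSigma w) := by
    push_cast
    rw [sub_smul]
    abel
  rw [show ((2:ℂ)⁻¹ : ℂ) = (((2⁻¹ : ℝ)) : ℂ) by norm_num, h2]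
  refine psd_smul _ _ (by norm_num) ?_
  refine Matrix.PosSemidef.add ?_ (psd_B w)
  exact psd_smul _ _ (by linarith) Matrix.PosSemidef.one

lemma trace_psd_nonneg (M : Mat2) (h : M.PosSemidef) : 0 ≤ M.trace := by
  rw [Matrix.trace]
  refine Finset.sum_nonneg fun i _ => ?_
  exact h.diag_nonneg

open scoped MatrixOrder in
lemma trace_mul_nonneg (A B : Mat2) (hA : A.PosSemidef) (hB : B.PosSemidef) :
    0 ≤ (A * B).trace := by
  obtain ⟨C, rfl⟩ := CStarAlgebra.nonneg_iff_eq_star_mul_self.mp hB.nonneg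
  rw [Matrix.star_eq_conjTranspose, ← Matrix.mul_assoc, Matrix.trace_mul_cycle]
  exact trace_psd_nonneg _ (hA.mul_mul_conjTranspose_same _)

end Aux2
section Aux3

variable {a b c : E3}

lemma inner_ba (hab : (inner ℝ a b : ℝ) = 0) : (inner ℝ b a : ℝ) = 0 := by
  rw [real_inner_comm]; exact hab

lemma inner_aa (hna : ‖a‖ = 1 / Real.sqrt 2) : (inner ℝ a a : ℝ) = 1 / 2 := by
  rw [real_inner_self_eq_norm_sq, hna, div_pow, one_pow,
    Real.sq_sqrt (by norm_num : (0:ℝ) ≤ 2)]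

lemma norm_comb_sq (hab : (inner ℝ a b : ℝ) = 0) (hac : (inner ℝ a c : ℝ) = 0)
    (hbc : (inner ℝ b c : ℝ) = 0) (hna : ‖a‖ = 1 / Real.sqrt 2)
    (hnb : ‖b‖ = 1 / Real.sqrt 2) (hnc : ‖c‖ = 1 / Real.sqrt 2) (x y z : ℝ) :
    ‖x • a + y • b + z • c‖ ^ 2 = (x ^ 2 + y ^ 2 + z ^ 2) / 2 := by
  rw [← real_inner_self_eq_norm_sq]
  simp only [inner_add_left, inner_add_right, real_inner_smul_left, real_inner_smul_right,
    inner_aa hna, inner_aa hnb, inner_aa hnc, hab, hac, hbc,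
    inner_ba hab, inner_ba hac, inner_ba hbc]
  ring

lemma norm_comb_le (hab : (inner ℝ a b : ℝ) = 0) (hac : (inner ℝ a c : ℝ) = 0)
    (hbc : (inner ℝ b c : ℝ) = 0) (hna : ‖a‖ = 1 / Real.sqrt 2)
    (hnb : ‖b‖ = 1 / Real.sqrt 2) (hnc : ‖c‖ = 1 / Real.sqrt 2) (x y z γ : ℝ)
    (hγ : 0 ≤ γ) (h : x ^ 2 + y ^ 2 + z ^ 2 ≤ 2 * γ ^ 2) :
    ‖x • a + y • b + z • c‖ ≤ γ := by
  have h2 := norm_comb_sq hab hac hbc hna hnb hnc x y z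
  nlinarith [norm_nonneg (x • a + y • b + z • c)]

lemma nvec_eq (a b : E3) (i j : Fin 2) :
    nvec a b i j = ((-1 : ℝ) ^ ((i : ℕ) + 1) / 2) • a + ((-1 : ℝ) ^ ((j : ℕ) + 1) / 2) • b := by
  unfold nvec
  module

lemma Gab_eq (a b : E3) (i j : Fin 2) :
    Gab a b i j = Amat ‖nvec a b i j‖ (nvec a b i j) := by
  set n := nvec a b i j with hn
  by_cases h : n = 0
  · rw [Gab, ← hn, h]
    simp [Amat, dotSigma_zero]
  · rw [Gab, ← hn, Amat, dotSigma_smul]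
    rw [smul_smul, smul_add, smul_add, smul_smul, smul_smul]
    push_cast
    have hne : (‖n‖ : ℂ) ≠ 0 := by exact_mod_cast norm_ne_zero_iff.mpr h
    congr 2
    · ring
    · field_simp

lemma norm_nvec (hab : (inner ℝ a b : ℝ) = 0) (hac : (inner ℝ a c : ℝ) = 0)
    (hbc : (inner ℝ b c : ℝ) = 0) (hna : ‖a‖ = 1 / Real.sqrt 2)
    (hnb : ‖b‖ = 1 / Real.sqrt 2) (hnc : ‖c‖ = 1 / Real.sqrt 2) (i j : Fin 2) :
    ‖nvec a b i j‖ = 1 / 2 := by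
  have h1 : nvec a b i j = ((-1 : ℝ) ^ ((i : ℕ) + 1) / 2) • a
      + ((-1 : ℝ) ^ ((j : ℕ) + 1) / 2) • b + (0 : ℝ) • c := by
    rw [nvec_eq]; simp
  have h2 := norm_comb_sq hab hac hbc hna hnb hnc
    ((-1 : ℝ) ^ ((i : ℕ) + 1) / 2) ((-1 : ℝ) ^ ((j : ℕ) + 1) / 2) 0
  rw [← h1] at h2
  have he : ∀ k : ℕ, ((-1 : ℝ) ^ k) ^ 2 = 1 := by
    intro k
    rw [← pow_mul, mul_comm, pow_mul, neg_one_sq, one_pow]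
  rw [div_pow, div_pow, he, he] at h2
  norm_num at h2
  have h3 := norm_nonneg (nvec a b i j)
  nlinarith [h2, h3]

end Aux3
section Aux4

variable {a b c : E3}

lemma fin2_sum (f : Fin 2 → Mat2) : (∑ j, f j) = f 0 + f 1 := Fin.sum_univ_two f

lemma Amat_congr {α β : ℝ} {u v : E3} (h1 : α = β) (h2 : u = v) : Amat α u = Amat β v := by
  rw [h1, h2]

set_option maxHeartbeats 1000000 in
lemma jm_coord (hab : (inner ℝ a b : ℝ) = 0) (hac : (inner ℝ a c : ℝ) = 0)
    (hbc : (inner ℝ b c : ℝ) = 0) (hna : ‖a‖ = 1 / Real.sqrt 2)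
    (hnb : ‖b‖ = 1 / Real.sqrt 2) (hnc : ‖c‖ = 1 / Real.sqrt 2)
    (α β γ p q r s x y z : ℝ)
    (h1a : 0 ≤ γ) (h1b : x ^ 2 + y ^ 2 + z ^ 2 ≤ 2 * γ ^ 2)
    (h2a : γ ≤ α) (h2b : (p - x) ^ 2 + (q - y) ^ 2 + (0 - z) ^ 2 ≤ 2 * (α - γ) ^ 2)
    (h3a : γ ≤ β) (h3b : (0 - x) ^ 2 + (r - y) ^ 2 + (s - z) ^ 2 ≤ 2 * (β - γ) ^ 2)
    (h4a : α + β - γ ≤ 2)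
    (h4b : (p - x) ^ 2 + (q + r - y) ^ 2 + (s - z) ^ 2 ≤ 2 * (2 - α - β + γ) ^ 2) :
    JMfin (fun k : Fin 2 => if k = 1 then Amat α (p • a + q • b) else 1 - Amat α (p • a + q • b))
      (fun k : Fin 2 => if k = 1 then Amat β (r • b + s • c)
        else 1 - Amat β (r • b + s • c)) := by
  have hE : 1 - Amat α (p • a + q • b) = Amat (2 - α) (-(p • a + q • b)) := one_sub_Amat _ _
  have hF : 1 - Amat β (r • b + s • c) = Amat (2 - β) (-(r • b + s • c)) := one_sub_Amat _ _
  set K00 : Mat2 := Amat (2 - α - β + γ) ((x - p) • a + (y - q - r) • b + (z - s) • c) with hK00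
  set K01 : Mat2 := Amat (β - γ) ((0 - x) • a + (r - y) • b + (s - z) • c) with hK01
  set K10 : Mat2 := Amat (α - γ) ((p - x) • a + (q - y) • b + (0 - z) • c) with hK10
  set K11 : Mat2 := Amat γ (x • a + y • b + z • c) with hK11
  have hpsd00 : K00.PosSemidef := psd_Amat _ _
    (norm_comb_le hab hac hbc hna hnb hnc _ _ _ _ (by linarith) (by nlinarith))
  have hpsd01 : K01.PosSemidef := psd_Amat _ _
    (norm_comb_le hab hac hbc hna hnb hnc _ _ _ _ (by linarith) (by nlinarith))
  have hpsd10 : K10.PosSemidef := psd_Amat _ _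
    (norm_comb_le hab hac hbc hna hnb hnc _ _ _ _ (by linarith) (by nlinarith))
  have hpsd11 : K11.PosSemidef := psd_Amat _ _
    (norm_comb_le hab hac hbc hna hnb hnc _ _ _ _ (by linarith) (by nlinarith))
  have hrow0 : K00 + K01 = 1 - Amat α (p • a + q • b) := by
    rw [hE, hK00, hK01, Amat_add]
    exact Amat_congr (by ring) (by module)
  have hrow1 : K10 + K11 = Amat α (p • a + q • b) := by
    rw [hK10, hK11, Amat_add]
    exact Amat_congr (by ring) (by module)
  have hcol0 : K00 + K10 = 1 - Amat β (r • b + s • c) := by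
    rw [hF, hK00, hK10, Amat_add]
    exact Amat_congr (by ring) (by module)
  have hcol1 : K01 + K11 = Amat β (r • b + s • c) := by
    rw [hK01, hK11, Amat_add]
    exact Amat_congr (by ring) (by module)
  refine ⟨fun i k => if i = 1 then (if k = 1 then K11 else K10)
    else (if k = 1 then K01 else K00), ?_, ?_, ?_, ?_⟩
  · intro i j
    by_cases hi : i = 1 <;> by_cases hj : j = 1
    · simp only [if_pos hi, if_pos hj]; exact hpsd11
    · simp only [if_pos hi, if_neg hj]; exact hpsd10
    · simp only [if_neg hi, if_pos hj]; exact hpsd01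
    · simp only [if_neg hi, if_neg hj]; exact hpsd00
  · simp only [fin2_sum, show ((0 : Fin 2) = 1) = False by simp,
      show ((1 : Fin 2) = 1) = True by simp, if_true, if_false]
    rw [show K00 + K01 + (K10 + K11) = (K10 + K11) + (K00 + K01) by abel, hrow1, hrow0]
    abel
  · intro i
    by_cases hi : i = 1
    · subst hi
      simp only [fin2_sum, show ((0 : Fin 2) = 1) = False by simp,
        show ((1 : Fin 2) = 1) = True by simp, if_true, if_false]
      exact hrow1
    · simp only [fin2_sum, if_neg hi, show ((0 : Fin 2) = 1) = False by simp,
        show ((1 : Fin 2) = 1) = True by simp, if_true, if_false]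
      exact hrow0
  · intro j
    by_cases hj : j = 1
    · subst hj
      simp only [fin2_sum, show ((0 : Fin 2) = 1) = False by simp,
        show ((1 : Fin 2) = 1) = True by simp, if_true, if_false]
      exact hcol1
    · simp only [fin2_sum, if_neg hj, show ((0 : Fin 2) = 1) = False by simp,
        show ((1 : Fin 2) = 1) = True by simp, if_true, if_false]
      exact hcol0

end Aux4
section Aux5

def th1 (d : ℤ) : ℤ := if d = 2 then 4 else if d = 0 then 3 else 0
def th2 (d : ℤ) : ℤ := if d = 2 then 0 else if d = 0 then 3 else 4

/-- Witness `12*(γ, x, y, z)` for joint measurability of `Amat (m/2) ((s/2)a+(t/2)b)` and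
`Amat (m'/2) ((s'/2)b+(t'/2)c)`, where `T = (m,s,t)`, `T2 = (m',s',t')`. -/
def wz (T T2 : ℤ × ℤ × ℤ) : ℤ × ℤ × ℤ × ℤ :=
  let m := T.1; let s := T.2.1; let t := T.2.2
  let m' := T2.1; let s' := T2.2.1; let t' := T2.2.2
  let d := t * s'
  if s = 0 ∧ t = 0 then (3*m*m'/2, 0, 3*m*s'/2, 3*m*t'/2)
  else if s' = 0 ∧ t' = 0 then (3*m*m'/2, 3*m'*s/2, 3*m'*t/2, 0)
  else if m = 1 then
    (if m' = 1 then (0, 0, 0, 0)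
     else if m' = 2 then (th1 d, th1 d * s, th1 d * t, 0)
     else (6, 6*s, 6*t, 0))
  else if m = 3 then
    (if m' = 1 then (6, 0, 6*s', 6*t')
     else if m' = 2 then (12 - th2 d, th2 d * s, th2 d * t + 6*s', 6*t')
     else (12, 6*s, 6*t + 6*s', 6*t'))
  else
    (if m' = 1 then (th1 d, 0, th1 d * s', th1 d * t')
     else if m' = 3 then (12 - th2 d, 6*s, 6*t + th2 d * s', th2 d * t')
     else if d = 0 then (6, 3*s, 3*t + 3*s', 3*t')
     else if d = 4 then (9, 6*s, 6*t, 0)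
     else (0, 0, 0, 0))

/-- The compatibility conditions, scaled by 12 (squares by 144), over `ℤ`. -/
abbrev condZ (T T2 : ℤ × ℤ × ℤ) : Prop :=
  0 ≤ (wz T T2).1 ∧
  (wz T T2).2.1 ^ 2 + (wz T T2).2.2.1 ^ 2 + (wz T T2).2.2.2 ^ 2 ≤ 2 * (wz T T2).1 ^ 2 ∧
  (wz T T2).1 ≤ 6 * T.1 ∧
  (6 * T.2.1 - (wz T T2).2.1) ^ 2 + (6 * T.2.2 - (wz T T2).2.2.1) ^ 2
      + (0 - (wz T T2).2.2.2) ^ 2 ≤ 2 * (6 * T.1 - (wz T T2).1) ^ 2 ∧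
  (wz T T2).1 ≤ 6 * T2.1 ∧
  (0 - (wz T T2).2.1) ^ 2 + (6 * T2.2.1 - (wz T T2).2.2.1) ^ 2
      + (6 * T2.2.2 - (wz T T2).2.2.2) ^ 2 ≤ 2 * (6 * T2.1 - (wz T T2).1) ^ 2 ∧
  6 * T.1 + 6 * T2.1 - (wz T T2).1 ≤ 24 ∧
  (6 * T.2.1 - (wz T T2).2.1) ^ 2 + (6 * T.2.2 + 6 * T2.2.1 - (wz T T2).2.2.1) ^ 2
      + (6 * T2.2.2 - (wz T T2).2.2.2) ^ 2 ≤ 2 * (24 - 6 * T.1 - 6 * T2.1 + (wz T T2).1) ^ 2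

def VZ : List (ℤ × ℤ × ℤ) :=
  [(0,0,0), (4,0,0), (2,0,0),
   (1,1,1), (1,1,-1), (1,-1,1), (1,-1,-1),
   (3,1,1), (3,1,-1), (3,-1,1), (3,-1,-1),
   (2,2,0), (2,-2,0), (2,0,2), (2,0,-2)]

lemma allZ : ∀ T ∈ VZ, ∀ T2 ∈ VZ, condZ T T2 := by decide

def sigX (X : Finset (Fin 2 × Fin 2)) : ℤ × ℤ × ℤ :=
  ((X.card : ℤ), ∑ p ∈ X, (-1 : ℤ) ^ ((p.1 : ℕ) + 1), ∑ p ∈ X, (-1 : ℤ) ^ ((p.2 : ℕ) + 1))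

lemma memVZ : ∀ X : Finset (Fin 2 × Fin 2), sigX X ∈ VZ := by decide

end Aux5
section Aux6

variable {a b c : E3}

lemma Amat_zero_zero : Amat 0 (0 : E3) = 0 := by
  simp [Amat, dotSigma_zero]

lemma Amat_sum {ι : Type*} (t : Finset ι) (f : ι → ℝ) (g : ι → E3) :
    (∑ p ∈ t, Amat (f p) (g p)) = Amat (∑ p ∈ t, f p) (∑ p ∈ t, g p) := by
  classical
  induction t using Finset.induction_on with
  | empty => simp [Amat_zero_zero]
  | insert _ _ ha ih =>
    rw [Finset.sum_insert ha, Finset.sum_insert ha, Finset.sum_insert ha, ih, Amat_add]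

lemma sum_nvec (X : Finset (Fin 2 × Fin 2)) :
    (∑ p ∈ X, nvec a b p.1 p.2)
      = ((((sigX X).2.1 : ℝ)) / 2) • a + ((((sigX X).2.2 : ℝ)) / 2) • b := by
  have h : ∀ p : Fin 2 × Fin 2, nvec a b p.1 p.2
      = ((-1 : ℝ) ^ ((p.1 : ℕ) + 1) / 2) • a + ((-1 : ℝ) ^ ((p.2 : ℕ) + 1) / 2) • b :=
    fun p => nvec_eq a b p.1 p.2
  simp only [h]
  rw [Finset.sum_add_distrib, ← Finset.sum_smul, ← Finset.sum_smul]
  congr 2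
  · rw [sigX]
    push_cast
    rw [Finset.sum_div]
  · rw [sigX]
    push_cast
    rw [Finset.sum_div]

lemma sum_Gab (hab : (inner ℝ a b : ℝ) = 0) (hac : (inner ℝ a c : ℝ) = 0)
    (hbc : (inner ℝ b c : ℝ) = 0) (hna : ‖a‖ = 1 / Real.sqrt 2)
    (hnb : ‖b‖ = 1 / Real.sqrt 2) (hnc : ‖c‖ = 1 / Real.sqrt 2)
    (X : Finset (Fin 2 × Fin 2)) :
    (∑ p ∈ X, Gab a b p.1 p.2)
      = Amat (((sigX X).1 : ℝ) / 2)
          (((((sigX X).2.1 : ℝ)) / 2) • a + ((((sigX X).2.2 : ℝ)) / 2) • b) := by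
  have h : ∀ p ∈ X, Gab a b p.1 p.2 = Amat (1 / 2) (nvec a b p.1 p.2) := by
    intro p _
    rw [Gab_eq, norm_nvec hab hac hbc hna hnb hnc]
  rw [Finset.sum_congr rfl h, Amat_sum, sum_nvec]
  congr 1
  rw [Finset.sum_const, sigX]
  push_cast
  ring

set_option maxHeartbeats 1000000 in
lemma part2 (hab : (inner ℝ a b : ℝ) = 0) (hac : (inner ℝ a c : ℝ) = 0)
    (hbc : (inner ℝ b c : ℝ) = 0) (hna : ‖a‖ = 1 / Real.sqrt 2)
    (hnb : ‖b‖ = 1 / Real.sqrt 2) (hnc : ‖c‖ = 1 / Real.sqrt 2)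
    (X Y : Finset (Fin 2 × Fin 2)) :
    JMfin (partitioningFin (fun p : Fin 2 × Fin 2 => Gab a b p.1 p.2) X)
      (partitioningFin (fun p : Fin 2 × Fin 2 => Gab b c p.1 p.2) Y) := by
  have hbc' : (inner ℝ b a : ℝ) = 0 := inner_ba hab
  -- the F-side sum lemma with (b, c): roles (a,b,c) ↦ (b,c,a)
  have hGX : partitioningFin (fun p : Fin 2 × Fin 2 => Gab a b p.1 p.2) X
      = fun k : Fin 2 => if k = 1
          then Amat (((sigX X).1 : ℝ) / 2)
            (((((sigX X).2.1 : ℝ)) / 2) • a + ((((sigX X).2.2 : ℝ)) / 2) • b)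
          else 1 - Amat (((sigX X).1 : ℝ) / 2)
            (((((sigX X).2.1 : ℝ)) / 2) • a + ((((sigX X).2.2 : ℝ)) / 2) • b) := by
    funext k
    rw [partitioningFin, sum_Gab hab hac hbc hna hnb hnc X]
  have hFY : partitioningFin (fun p : Fin 2 × Fin 2 => Gab b c p.1 p.2) Y
      = fun k : Fin 2 => if k = 1
          then Amat (((sigX Y).1 : ℝ) / 2)
            (((((sigX Y).2.1 : ℝ)) / 2) • b + ((((sigX Y).2.2 : ℝ)) / 2) • c)
          else 1 - Amat (((sigX Y).1 : ℝ) / 2)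
            (((((sigX Y).2.1 : ℝ)) / 2) • b + ((((sigX Y).2.2 : ℝ)) / 2) • c) := by
    funext k
    rw [partitioningFin, sum_Gab hbc (inner_ba hab) (inner_ba hac) hnb hnc hna Y]
  rw [hGX, hFY]
  obtain ⟨c1, c2, c3, c4, c5, c6, c7, c8⟩ := allZ _ (memVZ X) _ (memVZ Y)
  set W := wz (sigX X) (sigX Y) with hW
  have k1 : (0:ℝ) ≤ (W.1 : ℝ) := by exact_mod_cast c1
  have k2 : (W.2.1:ℝ)^2 + (W.2.2.1:ℝ)^2 + (W.2.2.2:ℝ)^2 ≤ 2*(W.1:ℝ)^2 := by exact_mod_cast c2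
  have k3 : (W.1:ℝ) ≤ 6*((sigX X).1:ℝ) := by exact_mod_cast c3
  have k4 : (6*((sigX X).2.1:ℝ) - W.2.1)^2 + (6*((sigX X).2.2:ℝ) - W.2.2.1)^2
      + (0 - (W.2.2.2:ℝ))^2 ≤ 2*(6*((sigX X).1:ℝ) - W.1)^2 := by exact_mod_cast c4
  have k5 : (W.1:ℝ) ≤ 6*((sigX Y).1:ℝ) := by exact_mod_cast c5
  have k6 : (0 - (W.2.1:ℝ))^2 + (6*((sigX Y).2.1:ℝ) - W.2.2.1)^2
      + (6*((sigX Y).2.2:ℝ) - W.2.2.2)^2 ≤ 2*(6*((sigX Y).1:ℝ) - W.1)^2 := by exact_mod_cast c6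
  have k7 : 6*((sigX X).1:ℝ) + 6*((sigX Y).1:ℝ) - (W.1:ℝ) ≤ 24 := by exact_mod_cast c7
  have k8 : (6*((sigX X).2.1:ℝ) - W.2.1)^2
      + (6*((sigX X).2.2:ℝ) + 6*((sigX Y).2.1:ℝ) - W.2.2.1)^2
      + (6*((sigX Y).2.2:ℝ) - W.2.2.2)^2
      ≤ 2*(24 - 6*((sigX X).1:ℝ) - 6*((sigX Y).1:ℝ) + W.1)^2 := by exact_mod_cast c8
  refine jm_coord hab hac hbc hna hnb hnc
    (((sigX X).1 : ℝ)/2) (((sigX Y).1 : ℝ)/2) ((W.1:ℝ)/12)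
    (((sigX X).2.1 : ℝ)/2) (((sigX X).2.2 : ℝ)/2)
    (((sigX Y).2.1 : ℝ)/2) (((sigX Y).2.2 : ℝ)/2)
    ((W.2.1:ℝ)/12) ((W.2.2.1:ℝ)/12) ((W.2.2.2:ℝ)/12)
    (by linarith) (by linarith) (by linarith) (by linarith)
    (by linarith) (by linarith) (by linarith) (by linarith)

end Aux6
section Aux7

variable {a b c : E3}

lemma dotSigma_neg (v : E3) : dotSigma (-v) = -dotSigma v := by
  rw [show -v = (-1 : ℝ) • v by module, dotSigma_smul]
  push_cast
  simp

lemma trace_Amat_dotSigma (ν : ℝ) (n v : E3) :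
    (Amat ν n * dotSigma v).trace = ((inner ℝ n v : ℝ) : ℂ) := by
  unfold Amat
  rw [Matrix.smul_mul, Matrix.trace_smul, Matrix.add_mul, Matrix.smul_mul, one_mul,
    Matrix.trace_add, Matrix.trace_smul, trace_dotSigma, trace_dotSigma_mul]
  simp

lemma trace_mul_Amat_comb (M : Mat2) (ρ x y z : ℝ) (u v w : E3) :
    (M * Amat ρ (-(x • u + y • v + z • w))).trace
      = (2⁻¹ : ℂ) * ((ρ : ℂ) * M.trace
        - ((x : ℂ) * (M * dotSigma u).trace + (y : ℂ) * (M * dotSigma v).trace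
          + (z : ℂ) * (M * dotSigma w).trace)) := by
  unfold Amat
  rw [dotSigma_neg, dotSigma_add, dotSigma_add, dotSigma_smul, dotSigma_smul, dotSigma_smul]
  rw [Matrix.mul_smul, Matrix.trace_smul]
  rw [show ((ρ:ℂ) • (1 : Mat2) + -((x:ℂ) • dotSigma u + (y:ℂ) • dotSigma v
      + (z:ℂ) • dotSigma w)) = (ρ:ℂ) • (1 : Mat2) - (x:ℂ) • dotSigma u - (y:ℂ) • dotSigma v
      - (z:ℂ) • dotSigma w by abel]
  rw [Matrix.mul_sub, Matrix.mul_sub, Matrix.mul_sub, Matrix.mul_smul, Matrix.mul_smul,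
    Matrix.mul_smul, Matrix.mul_smul, mul_one]
  rw [Matrix.trace_sub, Matrix.trace_sub, Matrix.trace_sub, Matrix.trace_smul,
    Matrix.trace_smul, Matrix.trace_smul, Matrix.trace_smul]
  simp only [smul_eq_mul]
  ring

lemma inner_nvec_fst (hab : (inner ℝ a b : ℝ) = 0) (hna : ‖a‖ = 1 / Real.sqrt 2) (i j : Fin 2) :
    (inner ℝ (nvec a b i j) a : ℝ) = (-1 : ℝ) ^ ((i : ℕ) + 1) / 4 := by
  rw [nvec_eq]
  simp only [inner_add_left, real_inner_smul_left, inner_aa hna, inner_ba hab]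
  ring

lemma inner_nvec_snd (hab : (inner ℝ a b : ℝ) = 0) (hnb : ‖b‖ = 1 / Real.sqrt 2) (i j : Fin 2) :
    (inner ℝ (nvec a b i j) b : ℝ) = (-1 : ℝ) ^ ((j : ℕ) + 1) / 4 := by
  rw [nvec_eq]
  simp only [inner_add_left, real_inner_smul_left, inner_aa hnb, hab]
  ring

set_option maxHeartbeats 4000000 in
lemma part1 (hab : (inner ℝ a b : ℝ) = 0) (hac : (inner ℝ a c : ℝ) = 0)
    (hbc : (inner ℝ b c : ℝ) = 0) (hna : ‖a‖ = 1 / Real.sqrt 2)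
    (hnb : ‖b‖ = 1 / Real.sqrt 2) (hnc : ‖c‖ = 1 / Real.sqrt 2) :
    ¬ JMfin (fun p : Fin 2 × Fin 2 => Gab a b p.1 p.2)
      (fun p : Fin 2 × Fin 2 => Gab b c p.1 p.2) := by
  rintro ⟨K, hpos, hsum, hrow, hcol⟩
  set ρ : ℝ := Real.sqrt (3 / 2) with hρ
  have hρsq : ρ ^ 2 = 3 / 2 := Real.sq_sqrt (by norm_num)
  have hρnn : (0 : ℝ) ≤ ρ := Real.sqrt_nonneg _
  set sg : Fin 2 → ℝ := fun i => if i = 1 then 1 else -1 with hsg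
  have hsg0 : sg 0 = -1 := by simp [hsg]
  have hsg1 : sg 1 = 1 := by simp [hsg]
  have hsgp : ∀ i : Fin 2, sg i = (-1 : ℝ) ^ ((i : ℕ) + 1) := by
    intro i
    fin_cases i <;> simp [hsg]
  have hsgsq : ∀ i : Fin 2, (sg i) ^ 2 = 1 := by
    intro i
    fin_cases i <;> simp [hsg]
  have hnormw : ∀ i j k : Fin 2, ‖sg i • a + sg j • b + sg k • c‖ = ρ := by
    intro i j k
    have h := norm_comb_sq hab hac hbc hna hnb hnc (sg i) (sg j) (sg k)
    rw [hsgsq, hsgsq, hsgsq] at h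
    rw [← Real.sqrt_sq (norm_nonneg (sg i • a + sg j • b + sg k • c)), h, hρ]
    norm_num
  have hpsdB : ∀ i j k : Fin 2, (Amat ρ (-(sg i • a + sg j • b + sg k • c))).PosSemidef := by
    intro i j k
    refine psd_Amat _ _ ?_
    rw [norm_neg, hnormw]
  have hS0 : 0 ≤ ∑ p : Fin 2 × Fin 2, ∑ q : Fin 2 × Fin 2,
      (K p q * Amat ρ (-(sg p.1 • a + sg q.1 • b + sg q.2 • c))).trace := by
    refine Finset.sum_nonneg fun p _ => Finset.sum_nonneg fun q _ => ?_
    exact trace_mul_nonneg _ _ (hpos p q) (hpsdB p.1 q.1 q.2)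
  have htr : (∑ p : Fin 2 × Fin 2, ∑ q : Fin 2 × Fin 2, (K p q).trace) = 2 := by
    have h := congrArg Matrix.trace hsum
    rw [Matrix.trace_sum] at h
    simp only [Matrix.trace_sum] at h
    rw [h, Matrix.trace_one]
    simp
  have hA : ∀ p : Fin 2 × Fin 2, (∑ q : Fin 2 × Fin 2, (K p q * dotSigma a).trace)
      = ((sg p.1 / 4 : ℝ) : ℂ) := by
    intro p
    rw [← Matrix.trace_sum, ← Finset.sum_mul, hrow p]
    simp only [Gab_eq]
    rw [trace_Amat_dotSigma, inner_nvec_fst hab hna, hsgp]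
  have hB : ∀ q : Fin 2 × Fin 2, (∑ p : Fin 2 × Fin 2, (K p q * dotSigma b).trace)
      = ((sg q.1 / 4 : ℝ) : ℂ) := by
    intro q
    rw [← Matrix.trace_sum, ← Finset.sum_mul, hcol q]
    simp only [Gab_eq]
    rw [trace_Amat_dotSigma, inner_nvec_fst hbc hnb, hsgp]
  have hC : ∀ q : Fin 2 × Fin 2, (∑ p : Fin 2 × Fin 2, (K p q * dotSigma c).trace)
      = ((sg q.2 / 4 : ℝ) : ℂ) := by
    intro q
    rw [← Matrix.trace_sum, ← Finset.sum_mul, hcol q]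
    simp only [Gab_eq]
    rw [trace_Amat_dotSigma, inner_nvec_snd hbc hnc, hsgp]
  have hterm : ∀ p q : Fin 2 × Fin 2,
      (K p q * Amat ρ (-(sg p.1 • a + sg q.1 • b + sg q.2 • c))).trace
        = (2⁻¹ : ℂ) * ((ρ : ℂ) * (K p q).trace
          - (((sg p.1 : ℝ) : ℂ) * (K p q * dotSigma a).trace
            + ((sg q.1 : ℝ) : ℂ) * (K p q * dotSigma b).trace
            + ((sg q.2 : ℝ) : ℂ) * (K p q * dotSigma c).trace)) :=
    fun p q => trace_mul_Amat_comb (K p q) ρ (sg p.1) (sg q.1) (sg q.2) a b c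
  have hA00 := hA (0,0); have hA01 := hA (0,1); have hA10 := hA (1,0); have hA11 := hA (1,1)
  have hB00 := hB (0,0); have hB01 := hB (0,1); have hB10 := hB (1,0); have hB11 := hB (1,1)
  have hC00 := hC (0,0); have hC01 := hC (0,1); have hC10 := hC (1,0); have hC11 := hC (1,1)
  simp only [Fintype.sum_prod_type, Fin.sum_univ_two] at hA00 hA01 hA10 hA11 hB00 hB01 hB10 htr
  simp only [Fintype.sum_prod_type, Fin.sum_univ_two] at hB11 hC00 hC01 hC10 hC11
  norm_num [hsg0, hsg1] at hA00 hA01 hA10 hA11 hB00 hB01 hB10 hB11 hC00 hC01 hC10 hC11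
  have hSval : (∑ p : Fin 2 × Fin 2, ∑ q : Fin 2 × Fin 2,
      (K p q * Amat ρ (-(sg p.1 • a + sg q.1 • b + sg q.2 • c))).trace)
        = (ρ : ℂ) - 3 / 2 := by
    simp only [hterm]
    simp only [Fintype.sum_prod_type, Fin.sum_univ_two]
    norm_num [hsg0, hsg1]
    linear_combination ((2:ℂ)⁻¹ * (ρ:ℂ)) * htr
      + (2:ℂ)⁻¹ * hA00 + (2:ℂ)⁻¹ * hA01 - (2:ℂ)⁻¹ * hA10 - (2:ℂ)⁻¹ * hA11
      + (2:ℂ)⁻¹ * hB00 + (2:ℂ)⁻¹ * hB01 - (2:ℂ)⁻¹ * hB10 - (2:ℂ)⁻¹ * hB11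
      + (2:ℂ)⁻¹ * hC00 - (2:ℂ)⁻¹ * hC01 + (2:ℂ)⁻¹ * hC10 - (2:ℂ)⁻¹ * hC11
  rw [hSval] at hS0
  have h2 : ((0:ℝ) : ℂ) ≤ ((ρ - 3/2 : ℝ) : ℂ) := by
    push_cast
    simpa using hS0
  have h3 : (0:ℝ) ≤ ρ - 3/2 := by exact_mod_cast h2
  nlinarith [hρsq, hρnn, h3]

end Aux7

/-- for mutually orthogonal `a`, `b`, `c` of norm `1/√2`, the four-outcome
joint observables `G` (of `E^{1,a}`, `E^{1,b}`) and `F` (of `E^{1,b}`, `E^{1,c}`) are not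
jointly measurable, yet all their two-outcome partitionings are pairwise jointly measurable. -/
theorem partitionings_jointly_measurable_but_not_observables (a b c : E3)
    (hab : (inner ℝ a b : ℝ) = 0) (hac : (inner ℝ a c : ℝ) = 0) (hbc : (inner ℝ b c : ℝ) = 0)
    (hna : ‖a‖ = 1 / Real.sqrt 2) (hnb : ‖b‖ = 1 / Real.sqrt 2) (hnc : ‖c‖ = 1 / Real.sqrt 2) :
    ¬ JMfin (fun p : Fin 2 × Fin 2 => Gab a b p.1 p.2) (fun p : Fin 2 × Fin 2 => Gab b c p.1 p.2) ∧
      ∀ X Y : Finset (Fin 2 × Fin 2),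
        JMfin (partitioningFin (fun p : Fin 2 × Fin 2 => Gab a b p.1 p.2) X)
          (partitioningFin (fun p : Fin 2 × Fin 2 => Gab b c p.1 p.2) Y) := by
  exact ⟨part1 hab hac hbc hna hnb hnc, fun X Y => part2 hab hac hbc hna hnb hnc X Y⟩
end
end

section
/- Let A and B be jointly measurable observables on a complex separable Hilbert space, with outcome spaces (Ω₁,Σ₁) and (Ω₂,Σ₂), and suppose A is sharp. Then A and B commute, i.e., A(X)B(Y) = B(Y)A(X) for all X ∈ Σ₁, Y ∈ Σ₂; every joint observable G of A and B satisfies G(X×Y) = A(X)B(Y) for all X ∈ Σ₁, Y ∈ Σ₂; and consequently the joint observable of A and B is unique. -/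
open MeasureTheory

noncomputable section

variable (H : Type*) [NormedAddCommGroup H] [InnerProductSpace ℂ H] [CompleteSpace H]

/-- A quantum observable (normalized positive operator valued measure) on the outcome
space `Ω`: a map assigning to each (measurable) set a bounded operator on `H`, which is
positive on measurable sets, normalized, and weakly countably additive. -/
structure Observable (Ω : Type*) [MeasurableSpace Ω] where
  app : Set Ω → (H →L[ℂ] H)
  isPositive : ∀ X : Set Ω, MeasurableSet X → (app X).IsPositive
  app_univ : app Set.univ = 1
  hasSum : ∀ (ψ : H) (X : ℕ → Set Ω), (∀ n, MeasurableSet (X n)) →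
    Pairwise (Function.onFun Disjoint X) →
    HasSum (fun n => (inner ℂ ψ (app (X n) ψ) : ℂ)) (inner ℂ ψ (app (⋃ n, X n) ψ) : ℂ)

variable {H}

/-- An observable is sharp if its values (on measurable sets) are orthogonal projections. -/
def Observable.Sharp {Ω : Type*} [MeasurableSpace Ω] (A : Observable H Ω) : Prop :=
  ∀ X : Set Ω, MeasurableSet X → IsSelfAdjoint (A.app X) ∧ A.app X ∘L A.app X = A.app X

/-- `G` is a joint observable of `A` and `B`: its margins are `A` and `B`.
The product type `Ω₁ × Ω₂` carries the product σ-algebra. -/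
def IsJointObservable {Ω₁ Ω₂ : Type*} [MeasurableSpace Ω₁] [MeasurableSpace Ω₂]
    (A : Observable H Ω₁) (B : Observable H Ω₂) (G : Observable H (Ω₁ × Ω₂)) : Prop :=
  (∀ X : Set Ω₁, MeasurableSet X → G.app (X ×ˢ (Set.univ : Set Ω₂)) = A.app X) ∧
  (∀ Y : Set Ω₂, MeasurableSet Y → G.app ((Set.univ : Set Ω₁) ×ˢ Y) = B.app Y)

/-- Two observables are jointly measurable if they have a joint observable. -/
def JointlyMeasurable {Ω₁ Ω₂ : Type*} [MeasurableSpace Ω₁] [MeasurableSpace Ω₂]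
    (A : Observable H Ω₁) (B : Observable H Ω₂) : Prop :=
  ∃ G : Observable H (Ω₁ × Ω₂), IsJointObservable A B G

section Aux

open scoped ComplexConjugate

local notation "⟪" x ", " y "⟫" => @inner ℂ _ _ x y

lemma clm_ext_inner {T S : H →L[ℂ] H} (h : ∀ ψ : H, ⟪ψ, T ψ⟫ = ⟪ψ, S ψ⟫) : T = S := by
  have : (T : H →ₗ[ℂ] H) = (S : H →ₗ[ℂ] H) := by
    rw [← ext_inner_map]
    intro x
    calc ⟪(T : H →ₗ[ℂ] H) x, x⟫ = conj ⟪x, T x⟫ := (inner_conj_symm _ _).symm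
      _ = conj ⟪x, S x⟫ := by rw [h x]
      _ = ⟪(S : H →ₗ[ℂ] H) x, x⟫ := inner_conj_symm _ _
  exact ContinuousLinearMap.coe_injective this

variable {Ω : Type*} [MeasurableSpace Ω]

lemma obs_empty (G : Observable H Ω) : G.app ∅ = 0 := by
  apply clm_ext_inner
  intro ψ
  have h := G.hasSum ψ (fun _ => ∅) (fun _ => MeasurableSet.empty)
    (fun i j hij => by simp [Function.onFun])
  rw [Set.iUnion_empty] at h
  have h0 : (⟪ψ, G.app ∅ ψ⟫ : ℂ) = 0 :=
    tendsto_nhds_unique tendsto_const_nhds h.summable.tendsto_cofinite_zero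
  simpa using h0

lemma obs_add (G : Observable H Ω) {X Y : Set Ω} (hX : MeasurableSet X) (hY : MeasurableSet Y)
    (hd : Disjoint X Y) : G.app (X ∪ Y) = G.app X + G.app Y := by
  apply clm_ext_inner
  intro ψ
  set f : ℕ → Set Ω := fun n => if n = 0 then X else if n = 1 then Y else ∅ with hf
  have hm : ∀ n, MeasurableSet (f n) := by
    intro n
    simp only [hf]
    split_ifs <;> first | exact hX | exact hY | exact MeasurableSet.empty
  have hdj : Pairwise (Function.onFun Disjoint f) := by
    intro i j hij
    simp only [Function.onFun, hf]
    split_ifs with h1 h2 h3 h4 h5 <;>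
      simp_all [hd, hd.symm]
  have hU : ⋃ n, f n = X ∪ Y := by
    apply Set.Subset.antisymm
    · apply Set.iUnion_subset
      intro n
      simp only [hf]
      split_ifs <;> simp
    · intro x hx
      rcases hx with hx | hx
      · exact Set.mem_iUnion.2 ⟨0, by simp [hf, hx]⟩
      · exact Set.mem_iUnion.2 ⟨1, by simp [hf, hx]⟩
  have h := G.hasSum ψ f hm hdj
  rw [hU] at h
  have hz : ∀ n ∉ ({0, 1} : Finset ℕ), (⟪ψ, G.app (f n) ψ⟫ : ℂ) = 0 := by
    intro n hn
    simp only [Finset.mem_insert, Finset.mem_singleton] at hn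
    push_neg at hn
    have : f n = ∅ := by simp [hf, hn.1, hn.2]
    rw [this, obs_empty]
    simp
  have h2 := hasSum_sum_of_ne_finset_zero (L := SummationFilter.unconditional ℕ) hz
  have hsum : ∑ n ∈ ({0, 1} : Finset ℕ), (⟪ψ, G.app (f n) ψ⟫ : ℂ)
      = ⟪ψ, G.app X ψ⟫ + ⟪ψ, G.app Y ψ⟫ := by
    rw [Finset.sum_insert (by norm_num), Finset.sum_singleton]
    simp [hf]
  rw [hsum] at h2
  have := h.unique h2
  simpa [inner_add_right] using this

lemma obs_compl (G : Observable H Ω) {X : Set Ω} (hX : MeasurableSet X) :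
    G.app Xᶜ = 1 - G.app X := by
  have h := obs_add G hX hX.compl disjoint_compl_right
  rw [Set.union_compl_self, G.app_univ] at h
  rw [eq_sub_iff_add_eq, add_comm, ← h]

lemma pos_inner_zero {E : H →L[ℂ] H} (hE : E.IsPositive) {φ : H}
    (h : (⟪φ, E φ⟫ : ℂ).re = 0) : E φ = 0 := by
  have re_zero : ∀ x : H, (⟪x, E φ⟫ : ℂ).re = 0 := by
    intro x
    have ha : 0 ≤ (⟪x, E x⟫ : ℂ).re := hE.re_inner_nonneg_right x
    have hsa : (⟪φ, E x⟫ : ℂ).re = (⟪x, E φ⟫ : ℂ).re := by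
      have h1 : (⟪φ, E x⟫ : ℂ) = starRingEnd ℂ (⟪x, E φ⟫ : ℂ) := by
        rw [← inner_conj_symm]
        congr 1
        calc (⟪E x, φ⟫ : ℂ) = ⟪(ContinuousLinearMap.adjoint E) x, φ⟫ := by
              rw [hE.isSelfAdjoint.adjoint_eq]
          _ = ⟪x, E φ⟫ := ContinuousLinearMap.adjoint_inner_left E φ x
      rw [h1, Complex.conj_re]
    have key2 : ∀ t : ℝ, 0 ≤ t ^ 2 * (⟪x, E x⟫ : ℂ).re + 2 * t * (⟪x, E φ⟫ : ℂ).re := by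
      intro t
      have hpos : 0 ≤ (⟪(t : ℂ) • x + φ, E ((t : ℂ) • x + φ)⟫ : ℂ).re :=
        hE.re_inner_nonneg_right _
      have hexp : (⟪(t : ℂ) • x + φ, E ((t : ℂ) • x + φ)⟫ : ℂ)
          = ((t ^ 2 : ℝ) : ℂ) * ⟪x, E x⟫ + ((t : ℝ) : ℂ) * ⟪x, E φ⟫
            + ((t : ℝ) : ℂ) * ⟪φ, E x⟫ + ⟪φ, E φ⟫ := by
        simp only [map_add, ContinuousLinearMap.map_smul, inner_add_left, inner_add_right,
          inner_smul_left, inner_smul_right, Complex.conj_ofReal]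
        push_cast
        ring
      rw [hexp] at hpos
      simp only [Complex.add_re, Complex.mul_re, Complex.ofReal_re, Complex.ofReal_im,
        zero_mul, sub_zero] at hpos
      rw [hsa, h] at hpos
      linarith
    set a := (⟪x, E x⟫ : ℂ).re with ha_def
    set b := (⟪x, E φ⟫ : ℂ).re with hb_def
    have hpos1 : (0:ℝ) < a + 1 := by linarith
    have h1 := key2 (-b / (a + 1))
    have heq : (-b / (a + 1)) ^ 2 * a + 2 * (-b / (a + 1)) * b
        = (b ^ 2 * a - 2 * b ^ 2 * (a + 1)) / (a + 1) ^ 2 := by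
      field_simp
      ring
    rw [heq] at h1
    have h2 : 0 ≤ b ^ 2 * a - 2 * b ^ 2 * (a + 1) := by
      have h3 := mul_nonneg h1 (sq_nonneg (a + 1))
      rwa [div_mul_cancel₀] at h3
      positivity
    have hb2 : b ^ 2 ≤ 0 := by nlinarith
    have : b ^ 2 = 0 := le_antisymm hb2 (sq_nonneg b)
    exact pow_eq_zero_iff two_ne_zero |>.mp this
  have key : ∀ x : H, (⟪x, E φ⟫ : ℂ) = 0 := by
    intro x
    have h1 := re_zero x
    have h2 := re_zero (Complex.I • x)
    rw [inner_smul_left] at h2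
    have him : (⟪x, E φ⟫ : ℂ).im = 0 := by
      have h3 : (starRingEnd ℂ Complex.I * ⟪x, E φ⟫).re = (⟪x, E φ⟫ : ℂ).im := by
        simp [Complex.mul_re]
      rw [h3] at h2
      exact h2
    exact Complex.ext h1 him
  have := key (E φ)
  rwa [← inner_self_eq_zero (𝕜 := ℂ)]

lemma absorb {E P : H →L[ℂ] H} (hE : E.IsPositive) (hP1 : IsSelfAdjoint P)
    (hP2 : P ∘L P = P) (hPE : (P - E).IsPositive) : E ∘L P = E ∧ P ∘L E = E := by
  have hEP : ∀ ψ : H, E (ψ - P ψ) = 0 := by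
    intro ψ
    set φ := ψ - P ψ with hφ
    have hPφ : P φ = 0 := by
      have := congrArg (fun T : H →L[ℂ] H => T ψ) hP2
      simp only [ContinuousLinearMap.comp_apply] at this
      simp [hφ, map_sub, this]
    apply pos_inner_zero hE
    have h1 : 0 ≤ (⟪φ, E φ⟫ : ℂ).re := hE.re_inner_nonneg_right φ
    have h2 : 0 ≤ (⟪φ, (P - E) φ⟫ : ℂ).re := hPE.re_inner_nonneg_right φ
    rw [ContinuousLinearMap.sub_apply, inner_sub_right, Complex.sub_re, hPφ] at h2
    simp only [inner_zero_right, Complex.zero_re, zero_sub, neg_nonneg] at h2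
    linarith
  have hcomp : E ∘L P = E := by
    ext ψ
    have := hEP ψ
    rw [map_sub, sub_eq_zero] at this
    simpa [ContinuousLinearMap.comp_apply] using this.symm
  refine ⟨hcomp, ?_⟩
  have : star (E * P) = P * E := by
    rw [star_mul, hP1.star_eq, hE.isSelfAdjoint.star_eq]
  rw [show (P ∘L E) = P * E from rfl, ← this, show (E * P) = E ∘L P from rfl, hcomp,
    hE.isSelfAdjoint.star_eq]

end Aux

section Main

open scoped ComplexConjugate

local notation "⟪" x ", " y "⟫" => @inner ℂ _ _ x y

variable {Ω₁ Ω₂ : Type*} [MeasurableSpace Ω₁] [MeasurableSpace Ω₂]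

def IsJointObservable' (A : Observable H Ω₁) (B : Observable H Ω₂)
    (G : Observable H (Ω₁ × Ω₂)) : Prop :=
  (∀ X : Set Ω₁, MeasurableSet X → G.app (X ×ˢ (Set.univ : Set Ω₂)) = A.app X) ∧
  (∀ Y : Set Ω₂, MeasurableSet Y → G.app ((Set.univ : Set Ω₁) ×ˢ Y) = B.app Y)

lemma joint_key {A : Observable H Ω₁} {B : Observable H Ω₂} {G : Observable H (Ω₁ × Ω₂)}
    (hA : ∀ X : Set Ω₁, MeasurableSet X →
      IsSelfAdjoint (A.app X) ∧ A.app X ∘L A.app X = A.app X)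
    (hG : IsJointObservable' A B G)
    {X : Set Ω₁} {Y : Set Ω₂} (hX : MeasurableSet X) (hY : MeasurableSet Y) :
    G.app (X ×ˢ Y) = A.app X ∘L B.app Y ∧
      A.app X ∘L B.app Y = B.app Y ∘L A.app X := by
  obtain ⟨hPsa, hPid⟩ := hA X hX
  obtain ⟨hQsa, hQid⟩ := hA Xᶜ hX.compl
  have hEpos : (G.app (X ×ˢ Y)).IsPositive := G.isPositive _ (hX.prod hY)
  have hE'pos : (G.app (Xᶜ ×ˢ Y)).IsPositive := G.isPositive _ (hX.compl.prod hY)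
  -- X ×ˢ univ = X ×ˢ Y ∪ X ×ˢ Yᶜ
  have hd1 : Disjoint (X ×ˢ Y) (X ×ˢ Yᶜ) := by
    rw [Set.disjoint_iff_inter_eq_empty, Set.prod_inter_prod, Set.inter_compl_self,
      Set.prod_empty]
  have hsplit1 : A.app X = G.app (X ×ˢ Y) + G.app (X ×ˢ Yᶜ) := by
    have h := obs_add G (hX.prod hY) (hX.prod hY.compl) hd1
    rw [← Set.prod_union, Set.union_compl_self] at h
    rw [← hG.1 X hX, h]
  have hPE : (A.app X - G.app (X ×ˢ Y)).IsPositive := by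
    have : A.app X - G.app (X ×ˢ Y) = G.app (X ×ˢ Yᶜ) := by
      rw [hsplit1]; abel
    rw [this]
    exact G.isPositive _ (hX.prod hY.compl)
  obtain ⟨hEP, hPE'⟩ := absorb hEpos hPsa hPid hPE
  -- Xᶜ part
  have hd2 : Disjoint (Xᶜ ×ˢ Y) (Xᶜ ×ˢ Yᶜ) := by
    rw [Set.disjoint_iff_inter_eq_empty, Set.prod_inter_prod, Set.inter_compl_self,
      Set.prod_empty]
  have hsplit2 : A.app Xᶜ = G.app (Xᶜ ×ˢ Y) + G.app (Xᶜ ×ˢ Yᶜ) := by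
    have h := obs_add G (hX.compl.prod hY) (hX.compl.prod hY.compl) hd2
    rw [← Set.prod_union, Set.union_compl_self] at h
    rw [← hG.1 Xᶜ hX.compl, h]
  have hQE : (A.app Xᶜ - G.app (Xᶜ ×ˢ Y)).IsPositive := by
    have : A.app Xᶜ - G.app (Xᶜ ×ˢ Y) = G.app (Xᶜ ×ˢ Yᶜ) := by
      rw [hsplit2]; abel
    rw [this]
    exact G.isPositive _ (hX.compl.prod hY.compl)
  obtain ⟨hE'Q, hQE'⟩ := absorb hE'pos hQsa hQid hQE
  -- A Xᶜ = 1 - A X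
  have hcompl : A.app Xᶜ = 1 - A.app X := obs_compl A hX
  have hPQ : A.app X ∘L A.app Xᶜ = 0 := by
    rw [hcompl]
    show A.app X * (1 - A.app X) = 0
    rw [mul_sub, mul_one, show A.app X * A.app X = A.app X from hPid, sub_self]
  have hQP : A.app Xᶜ ∘L A.app X = 0 := by
    rw [hcompl]
    show (1 - A.app X) * A.app X = 0
    rw [sub_mul, one_mul, show A.app X * A.app X = A.app X from hPid, sub_self]
  have hPE'' : A.app X ∘L G.app (Xᶜ ×ˢ Y) = 0 := by
    rw [← hQE', ← ContinuousLinearMap.comp_assoc, hPQ, ContinuousLinearMap.zero_comp]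
  have hE''P : G.app (Xᶜ ×ˢ Y) ∘L A.app X = 0 := by
    rw [← hE'Q, ContinuousLinearMap.comp_assoc, hQP, ContinuousLinearMap.comp_zero]
  have hd3 : Disjoint (X ×ˢ Y) (Xᶜ ×ˢ Y) := by
    rw [Set.disjoint_iff_inter_eq_empty, Set.prod_inter_prod, Set.inter_compl_self,
      Set.empty_prod]
  have hBsplit : B.app Y = G.app (X ×ˢ Y) + G.app (Xᶜ ×ˢ Y) := by
    have h := obs_add G (hX.prod hY) (hX.compl.prod hY) hd3
    rw [← Set.union_prod, Set.union_compl_self] at h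
    rw [← hG.2 Y hY, h]
  have h1 : A.app X ∘L B.app Y = G.app (X ×ˢ Y) := by
    rw [hBsplit, ContinuousLinearMap.comp_add, hPE', hPE'', add_zero]
  have h2 : B.app Y ∘L A.app X = G.app (X ×ˢ Y) := by
    rw [hBsplit, ContinuousLinearMap.add_comp, hEP, hE''P, add_zero]
  exact ⟨h1.symm, by rw [h1, h2]⟩

lemma joint_unique {A : Observable H Ω₁} {B : Observable H Ω₂}
    (hA : ∀ X : Set Ω₁, MeasurableSet X →
      IsSelfAdjoint (A.app X) ∧ A.app X ∘L A.app X = A.app X)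
    {G G' : Observable H (Ω₁ × Ω₂)} (hG : IsJointObservable' A B G)
    (hG' : IsJointObservable' A B G') :
    ∀ Z : Set (Ω₁ × Ω₂), MeasurableSet Z → G.app Z = G'.app Z := by
  intro Z hZ
  refine MeasurableSpace.induction_on_inter (C := fun Z _ => G.app Z = G'.app Z)
    generateFrom_prod.symm isPiSystem_prod ?_ ?_ ?_ ?_ Z hZ
  · show G.app ∅ = G'.app ∅
    rw [obs_empty, obs_empty]
  · rintro _ ⟨X, hX, Y, hY, rfl⟩
    show G.app _ = G'.app _
    rw [(joint_key hA hG hX hY).1, (joint_key hA hG' hX hY).1]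
  · intro t ht hC
    show G.app tᶜ = G'.app tᶜ
    rw [obs_compl G ht, obs_compl G' ht, hC]
  · intro f hdisj hmeas hC
    apply clm_ext_inner
    intro ψ
    have h1 := G.hasSum ψ f hmeas hdisj
    have h2 := G'.hasSum ψ f hmeas hdisj
    have heq : (fun n => (⟪ψ, G.app (f n) ψ⟫ : ℂ)) = fun n => (⟪ψ, G'.app (f n) ψ⟫ : ℂ) := by
      funext n
      rw [hC n]
    rw [heq] at h1
    exact h1.unique h2

end Main

/-- if `A` is sharp and `A`, `B` are jointly measurable, then `A` and `B`
commute, every joint observable `G` satisfies `G(X × Y) = A(X)B(Y)`, and the joint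
observable is unique. -/
theorem sharp_jointly_measurable_commute_unique
    {H : Type*} [NormedAddCommGroup H] [InnerProductSpace ℂ H] [CompleteSpace H]
    [TopologicalSpace.SeparableSpace H]
    {Ω₁ Ω₂ : Type*} [MeasurableSpace Ω₁] [MeasurableSpace Ω₂]
    (A : Observable H Ω₁) (B : Observable H Ω₂)
    (hA : A.Sharp) (hJM : JointlyMeasurable A B) :
    (∀ (X : Set Ω₁) (Y : Set Ω₂), MeasurableSet X → MeasurableSet Y →
      A.app X ∘L B.app Y = B.app Y ∘L A.app X) ∧
    (∀ G : Observable H (Ω₁ × Ω₂), IsJointObservable A B G →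
      ∀ (X : Set Ω₁) (Y : Set Ω₂), MeasurableSet X → MeasurableSet Y →
        G.app (X ×ˢ Y) = A.app X ∘L B.app Y) ∧
    (∀ G G' : Observable H (Ω₁ × Ω₂), IsJointObservable A B G → IsJointObservable A B G' →
      ∀ Z : Set (Ω₁ × Ω₂), MeasurableSet Z → G.app Z = G'.app Z) := by
  obtain ⟨G0, hG0⟩ := hJM
  exact ⟨fun X Y hX hY => (joint_key hA ⟨hG0.1, hG0.2⟩ hX hY).2,
    fun G hG X Y hX hY => (joint_key hA ⟨hG.1, hG.2⟩ hX hY).1,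
    fun G G' hG hG' => joint_unique hA ⟨hG.1, hG.2⟩ ⟨hG'.1, hG'.2⟩⟩
end
end
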